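/- arXiv:2402.06301 — 3 statements merged into one kernel-verified Lean document; each statement's English description precedes it below -/
import Mathlib

section
/- Convergence of the Helmholtz filter: let y ∈ H²(0,L) ∩ H¹₀(0,L) be fixed, and for α > 0 let z_α ∈ H²(0,L) ∩ H¹₀(0,L) solve z_α - α² (z_α)_xx = y_α, where y_α ∈ L²(0,L). Then ∫₀^L |(z_α - y)_x|² dx ≤ ∫₀^L |(y_α - y)_x|² dx + α² ‖y_xx‖²_{L²}, provided y_α ∈ H¹₀(0,L). In particular, if y_α → y strongly in H¹₀(0,L) as α → 0⁺, then z_α → y strongly in H¹₀(0,L). -/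
open Set Filter Topology MeasureTheory intervalIntegral

lemma helmholtz_key (L α : ℝ) (hL : 0 < L)
    (y z w : ℝ → ℝ) (hy : ContDiff ℝ 2 y) (hz : ContDiff ℝ 2 z)
    (hw : ContDiff ℝ 1 w)
    (heq : ∀ x ∈ Ioo 0 L, z x - α ^ 2 * deriv (deriv z) x = w x)
    (hy0 : y 0 = 0) (hyL : y L = 0) (hz0 : z 0 = 0) (hzL : z L = 0)
    (hw0 : w 0 = 0) (hwL : w L = 0) :
    (∫ x in (0:ℝ)..L, (deriv z x - deriv y x) ^ 2)
      ≤ (∫ x in (0:ℝ)..L, (deriv w x - deriv y x) ^ 2)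
        + α ^ 2 * (∫ x in (0:ℝ)..L, (deriv (deriv y) x) ^ 2) := by
  -- regularity facts
  have hyd : Differentiable ℝ y := hy.differentiable two_ne_zero
  have hzd : Differentiable ℝ z := hz.differentiable two_ne_zero
  have hwd : Differentiable ℝ w := hw.differentiable one_ne_zero
  have hy' : ContDiff ℝ 1 (deriv y) :=
    ((contDiff_succ_iff_deriv (n := 1)).mp (by exact_mod_cast hy)).2.2
  have hz' : ContDiff ℝ 1 (deriv z) :=
    ((contDiff_succ_iff_deriv (n := 1)).mp (by exact_mod_cast hz)).2.2
  have hyd' : Differentiable ℝ (deriv y) := hy'.differentiable one_ne_zero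
  have hzd' : Differentiable ℝ (deriv z) := hz'.differentiable one_ne_zero
  have hcy'' : Continuous (deriv (deriv y)) := hy'.continuous_deriv le_rfl
  have hcz'' : Continuous (deriv (deriv z)) := hz'.continuous_deriv le_rfl
  have hcw' : Continuous (deriv w) := hw.continuous_deriv le_rfl
  have hcy' : Continuous (deriv y) := hyd'.continuous
  have hcz' : Continuous (deriv z) := hzd'.continuous
  set e : ℝ → ℝ := fun x => z x - y x with he_def
  set f : ℝ → ℝ := fun x => w x - y x with hf_def
  have hed : Differentiable ℝ e := hzd.sub hyd
  have hfd : Differentiable ℝ f := hwd.sub hyd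
  have hde : ∀ x, deriv e x = deriv z x - deriv y x := fun x =>
    deriv_sub (hzd x) (hyd x)
  have hdf : ∀ x, deriv f x = deriv w x - deriv y x := fun x =>
    deriv_sub (hwd x) (hyd x)
  have hdeE : deriv e = fun x => deriv z x - deriv y x := funext hde
  have hdfE : deriv f = fun x => deriv w x - deriv y x := funext hdf
  have hed' : Differentiable ℝ (deriv e) := by rw [hdeE]; exact hzd'.sub hyd'
  have hdde : ∀ x, deriv (deriv e) x = deriv (deriv z) x - deriv (deriv y) x := by
    intro x; rw [hdeE]; exact deriv_sub (hzd' x) (hyd' x)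
  have hddeE : deriv (deriv e) = fun x => deriv (deriv z) x - deriv (deriv y) x :=
    funext hdde
  have hce : Continuous e := hed.continuous
  have hcf : Continuous f := hfd.continuous
  have hce' : Continuous (deriv e) := hed'.continuous
  have hce'' : Continuous (deriv (deriv e)) := by rw [hddeE]; exact hcz''.sub hcy''
  have hcf' : Continuous (deriv f) := by rw [hdfE]; exact hcw'.sub hcy'
  have he0 : e 0 = 0 := by simp [he_def, hz0, hy0]
  have heL : e L = 0 := by simp [he_def, hzL, hyL]
  have hf0 : f 0 = 0 := by simp [hf_def, hw0, hy0]
  have hfL : f L = 0 := by simp [hf_def, hwL, hyL]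
  -- integrability
  have iA : IntervalIntegrable (fun x => e x * deriv (deriv e) x) volume 0 L :=
    (hce.mul hce'').intervalIntegrable 0 L
  have iEE : IntervalIntegrable (fun x => (deriv (deriv e) x) ^ 2) volume 0 L :=
    ((hce''.pow 2)).intervalIntegrable 0 L
  have iFE : IntervalIntegrable (fun x => f x * deriv (deriv e) x) volume 0 L :=
    (hcf.mul hce'').intervalIntegrable 0 L
  have iYE : IntervalIntegrable (fun x => deriv (deriv y) x * deriv (deriv e) x) volume 0 L :=
    (hcy''.mul hce'').intervalIntegrable 0 L
  have iE1 : IntervalIntegrable (fun x => deriv e x * deriv e x) volume 0 L :=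
    (hce'.mul hce').intervalIntegrable 0 L
  have iE2 : IntervalIntegrable (fun x => (deriv e x) ^ 2) volume 0 L :=
    ((hce'.pow 2)).intervalIntegrable 0 L
  have iF2 : IntervalIntegrable (fun x => (deriv f x) ^ 2) volume 0 L :=
    ((hcf'.pow 2)).intervalIntegrable 0 L
  have iY2 : IntervalIntegrable (fun x => (deriv (deriv y) x) ^ 2) volume 0 L :=
    ((hcy''.pow 2)).intervalIntegrable 0 L
  have iFE' : IntervalIntegrable (fun x => deriv f x * deriv e x) volume 0 L :=
    (hcf'.mul hce').intervalIntegrable 0 L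
  -- abbreviations for integrals
  set A := ∫ x in (0:ℝ)..L, (deriv e x) ^ 2 with hA
  set B := ∫ x in (0:ℝ)..L, (deriv (deriv e) x) ^ 2 with hB
  set C := ∫ x in (0:ℝ)..L, deriv f x * deriv e x with hC
  set D := ∫ x in (0:ℝ)..L, deriv (deriv y) x * deriv (deriv e) x with hD
  set E := ∫ x in (0:ℝ)..L, (deriv f x) ^ 2 with hE
  set Y := ∫ x in (0:ℝ)..L, (deriv (deriv y) x) ^ 2 with hY
  -- integration by parts
  have ibp1 : (∫ x in (0:ℝ)..L, e x * deriv (deriv e) x) = -A := by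
    have h := intervalIntegral.integral_mul_deriv_eq_deriv_mul
      (u := e) (u' := deriv e) (v := deriv e) (v' := deriv (deriv e))
      (fun x _ => (hed x).hasDerivAt) (fun x _ => (hed' x).hasDerivAt)
      (hce'.intervalIntegrable 0 L) (hce''.intervalIntegrable 0 L)
    rw [h, he0, heL, hA]
    have : (fun x => deriv e x * deriv e x) = fun x => (deriv e x) ^ 2 := by
      ext x; ring
    rw [this]; ring
  have ibp2 : (∫ x in (0:ℝ)..L, f x * deriv (deriv e) x) = -C := by
    have h := intervalIntegral.integral_mul_deriv_eq_deriv_mul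
      (u := f) (u' := deriv f) (v := deriv e) (v' := deriv (deriv e))
      (fun x _ => (hfd x).hasDerivAt) (fun x _ => (hed' x).hasDerivAt)
      (hcf'.intervalIntegrable 0 L) (hce''.intervalIntegrable 0 L)
    rw [h, hf0, hfL, hC]; ring
  -- the equation multiplied by e''
  have heqe : Set.EqOn
      (fun x => (e x - α ^ 2 * deriv (deriv e) x) * deriv (deriv e) x)
      (fun x => (f x + α ^ 2 * deriv (deriv y) x) * deriv (deriv e) x)
      (Icc 0 L) := by
    have h1 : Set.EqOn
        (fun x => (e x - α ^ 2 * deriv (deriv e) x) * deriv (deriv e) x)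
        (fun x => (f x + α ^ 2 * deriv (deriv y) x) * deriv (deriv e) x)
        (Ioo 0 L) := by
      intro x hx
      have h2 := heq x hx
      simp only [hdde x]
      simp only [he_def, hf_def]
      linear_combination (deriv (deriv z) x - deriv (deriv y) x) * h2
    have hc1 : Continuous (fun x => (e x - α ^ 2 * deriv (deriv e) x) * deriv (deriv e) x) :=
      (hce.sub (continuous_const.mul hce'')).mul hce''
    have hc2 : Continuous (fun x => (f x + α ^ 2 * deriv (deriv y) x) * deriv (deriv e) x) :=
      (hcf.add (continuous_const.mul hcy'')).mul hce''
    have := h1.closure hc1 hc2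
    rwa [closure_Ioo hL.ne] at this
  have hint : (∫ x in (0:ℝ)..L, (e x - α ^ 2 * deriv (deriv e) x) * deriv (deriv e) x)
      = ∫ x in (0:ℝ)..L, (f x + α ^ 2 * deriv (deriv y) x) * deriv (deriv e) x :=
    intervalIntegral.integral_congr (by rwa [Set.uIcc_of_le hL.le])
  -- expand both sides
  have expandL : (∫ x in (0:ℝ)..L, (e x - α ^ 2 * deriv (deriv e) x) * deriv (deriv e) x)
      = (∫ x in (0:ℝ)..L, e x * deriv (deriv e) x) - α ^ 2 * B := by
    have h : (fun x => (e x - α ^ 2 * deriv (deriv e) x) * deriv (deriv e) x)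
        = fun x => e x * deriv (deriv e) x - α ^ 2 * (deriv (deriv e) x) ^ 2 := by
      ext x; ring
    rw [h, intervalIntegral.integral_sub iA (iEE.const_mul _),
      intervalIntegral.integral_const_mul]
  have expandR : (∫ x in (0:ℝ)..L, (f x + α ^ 2 * deriv (deriv y) x) * deriv (deriv e) x)
      = (∫ x in (0:ℝ)..L, f x * deriv (deriv e) x) + α ^ 2 * D := by
    have h : (fun x => (f x + α ^ 2 * deriv (deriv y) x) * deriv (deriv e) x)
        = fun x => f x * deriv (deriv e) x
            + α ^ 2 * (deriv (deriv y) x * deriv (deriv e) x) := by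
      ext x; ring
    rw [h, intervalIntegral.integral_add iFE (iYE.const_mul _),
      intervalIntegral.integral_const_mul]
  have energy : A + α ^ 2 * B = C - α ^ 2 * D := by
    rw [expandL, expandR, ibp1, ibp2] at hint; linarith
  -- bounds
  have bound1 : C ≤ (∫ x in (0:ℝ)..L, ((deriv f x) ^ 2 / 2 + (deriv e x) ^ 2 / 2)) := by
    apply intervalIntegral.integral_mono_on hL.le iFE'
      ((iF2.div_const 2).add (iE2.div_const 2))
    intro x _
    nlinarith [sq_nonneg (deriv f x - deriv e x)]
  have bound1' : C ≤ E / 2 + A / 2 := by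
    rwa [intervalIntegral.integral_add (iF2.div_const 2) (iE2.div_const 2),
      intervalIntegral.integral_div, intervalIntegral.integral_div] at bound1
  have bound2 : -D ≤ (∫ x in (0:ℝ)..L,
      ((deriv (deriv y) x) ^ 2 / 2 + (deriv (deriv e) x) ^ 2 / 2)) := by
    rw [hD, ← intervalIntegral.integral_neg]
    apply intervalIntegral.integral_mono_on hL.le iYE.neg
      ((iY2.div_const 2).add (iEE.div_const 2))
    intro x _
    simp only [Pi.neg_apply]
    nlinarith [sq_nonneg (deriv (deriv y) x + deriv (deriv e) x)]
  have bound2' : -D ≤ Y / 2 + B / 2 := by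
    rwa [intervalIntegral.integral_add (iY2.div_const 2) (iEE.div_const 2),
      intervalIntegral.integral_div, intervalIntegral.integral_div] at bound2
  have hBpos : 0 ≤ B := intervalIntegral.integral_nonneg hL.le fun x _ => sq_nonneg _
  have h3 : α ^ 2 * (-D) ≤ α ^ 2 * (Y / 2 + B / 2) :=
    mul_le_mul_of_nonneg_left bound2' (sq_nonneg α)
  have hB2 : 0 ≤ α ^ 2 * B := mul_nonneg (sq_nonneg α) hBpos
  have h3' : -(α ^ 2 * D) ≤ α ^ 2 * Y / 2 + α ^ 2 * B / 2 := by
    have := h3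
    ring_nf at this ⊢
    linarith
  have final : A ≤ E + α ^ 2 * Y := by linarith
  -- rewrite in terms of original functions
  have hgoalA : (∫ x in (0:ℝ)..L, (deriv z x - deriv y x) ^ 2) = A := by
    rw [hA]; congr 1; ext x; rw [hde x]
  have hgoalE : (∫ x in (0:ℝ)..L, (deriv w x - deriv y x) ^ 2) = E := by
    rw [hE]; congr 1; ext x; rw [hdf x]
  rw [hgoalA, hgoalE]; exact final

/-- Convergence of the Helmholtz filter: if z_α - α²(z_α)_xx = y_α with
Dirichlet conditions, then
∫ |(z_α - y)_x|² ≤ ∫ |(y_α - y)_x|² + α²‖y_xx‖₂², and in particular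
y_α → y in H¹₀ implies z_α → y in H¹₀ as α → 0⁺. -/
theorem helmholtz_filter_convergence (L : ℝ) (hL : 0 < L)
    (y : ℝ → ℝ) (hy : ContDiff ℝ 2 y) (hy0 : y 0 = 0) (hyL : y L = 0)
    (zα yα : ℝ → ℝ → ℝ)
    (hz_reg : ∀ α > (0:ℝ), ContDiff ℝ 2 (zα α))
    (hyα_reg : ∀ α > (0:ℝ), ContDiff ℝ 1 (yα α))
    (heq : ∀ α > (0:ℝ), ∀ x ∈ Ioo 0 L,
      zα α x - α ^ 2 * deriv (deriv (zα α)) x = yα α x)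
    (hz_bc : ∀ α > (0:ℝ), zα α 0 = 0 ∧ zα α L = 0)
    (hyα_bc : ∀ α > (0:ℝ), yα α 0 = 0 ∧ yα α L = 0) :
    (∀ α > (0:ℝ),
      (∫ x in (0:ℝ)..L, (deriv (zα α) x - deriv y x) ^ 2)
        ≤ (∫ x in (0:ℝ)..L, (deriv (yα α) x - deriv y x) ^ 2)
          + α ^ 2 * (∫ x in (0:ℝ)..L, (deriv (deriv y) x) ^ 2))
    ∧ (Tendsto (fun α => ∫ x in (0:ℝ)..L, (deriv (yα α) x - deriv y x) ^ 2)
          (𝓝[>] 0) (𝓝 0) →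
       Tendsto (fun α => ∫ x in (0:ℝ)..L, (deriv (zα α) x - deriv y x) ^ 2)
          (𝓝[>] 0) (𝓝 0)) := by
  have main : ∀ α > (0:ℝ),
      (∫ x in (0:ℝ)..L, (deriv (zα α) x - deriv y x) ^ 2)
        ≤ (∫ x in (0:ℝ)..L, (deriv (yα α) x - deriv y x) ^ 2)
          + α ^ 2 * (∫ x in (0:ℝ)..L, (deriv (deriv y) x) ^ 2) := by
    intro α hα
    exact helmholtz_key L α hL y (zα α) (yα α) hy (hz_reg α hα) (hyα_reg α hα)
      (heq α hα) hy0 hyL (hz_bc α hα).1 (hz_bc α hα).2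
      (hyα_bc α hα).1 (hyα_bc α hα).2
  refine ⟨main, ?_⟩
  intro hF
  set Y := ∫ x in (0:ℝ)..L, (deriv (deriv y) x) ^ 2 with hYdef
  have hC : Tendsto (fun α : ℝ => α ^ 2 * Y) (𝓝[>] 0) (𝓝 0) := by
    have h1 : Tendsto (fun α : ℝ => α ^ 2 * Y) (𝓝 0) (𝓝 ((0:ℝ) ^ 2 * Y)) :=
      ((continuous_pow 2).mul continuous_const).tendsto 0
    simpa using h1.mono_left nhdsWithin_le_nhds
  have hsum := hF.add hC
  rw [add_zero] at hsum
  apply squeeze_zero' ?_ ?_ hsum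
  · filter_upwards [self_mem_nhdsWithin] with α hα
    exact intervalIntegral.integral_nonneg hL.le fun x _ => sq_nonneg _
  · filter_upwards [self_mem_nhdsWithin] with α hα
    exact main α hα
end

section
/- Under the hypotheses of the decay estimate (‖y₀‖_∞ < π/L, r = ½((π/L)²-‖y₀‖²_∞)), the weighted dissipation integral satisfies ∫₀^t e^{rσ}‖y_x(·,σ)‖₂² dσ ≤ (2 + ‖y₀‖²_∞/r)‖y₀‖₂² for all t ≥ 0. -/
open Set Real intervalIntegral

/-- Weighted dissipation bound: under the decay hypotheses
(E' + D ≤ m² E, Poincaré, E(t) ≤ E(0)e^{-2rt}, r = ½((π/L)² - m²) > 0),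
one has ∫₀^t e^{rσ} D(σ) dσ ≤ (2 + m²/r) E(0) for all t ≥ 0. -/
theorem burgers_alpha_weighted_dissipation (L m r : ℝ) (E D E' : ℝ → ℝ)
    (hL : 0 < L) (hm : 0 ≤ m) (hmL : m < π / L)
    (hr : r = ((π / L) ^ 2 - m ^ 2) / 2)
    (hderiv : ∀ t ≥ (0:ℝ), HasDerivAt E (E' t) t)
    (hE'cont : Continuous E') (hDcont : Continuous D)
    (hEnonneg : ∀ t ≥ (0:ℝ), 0 ≤ E t)
    (hDnonneg : ∀ t ≥ (0:ℝ), 0 ≤ D t)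
    (henergy : ∀ t ≥ (0:ℝ), E' t + D t ≤ m ^ 2 * E t)
    (hpoincare : ∀ t ≥ (0:ℝ), (π / L) ^ 2 * E t ≤ D t)
    (hdecay : ∀ t ≥ (0:ℝ), E t ≤ E 0 * exp (-2 * r * t)) :
    ∀ t ≥ (0:ℝ), (∫ σ in (0:ℝ)..t, exp (r * σ) * D σ) ≤ (2 + m ^ 2 / r) * E 0 := by
  have hrpos : 0 < r := by
    have h2 : m ^ 2 < (π / L) ^ 2 := by
      apply pow_lt_pow_left₀ hmL hm
      norm_num
    rw [hr]; linarith
  have hE0 : 0 ≤ E 0 := hEnonneg 0 le_rfl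
  have hmr : 0 ≤ m ^ 2 + r := by positivity
  intro t ht
  set g : ℝ → ℝ := fun σ => exp (r * σ) * (r * E σ + E' σ) with hg
  have hEcont : ContinuousOn E (Set.Icc 0 t) := fun σ hσ =>
    ((hderiv σ hσ.1).continuousAt).continuousWithinAt
  have hgcont : ContinuousOn g (Set.Icc 0 t) := by
    apply ContinuousOn.mul
    · exact (Real.continuous_exp.comp (continuous_const.mul continuous_id)).continuousOn
    · exact (continuousOn_const.mul hEcont).add hE'cont.continuousOn
  have hgint : IntervalIntegrable g MeasureTheory.volume 0 t := by
    apply ContinuousOn.intervalIntegrable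
    rwa [Set.uIcc_of_le ht]
  have hFTC : ∫ σ in (0:ℝ)..t, g σ = exp (r * t) * E t - exp (r * 0) * E 0 := by
    apply intervalIntegral.integral_eq_sub_of_hasDerivAt
    · intro σ hσ
      rw [Set.uIcc_of_le ht] at hσ
      have h1 : HasDerivAt (fun σ => exp (r * σ)) (r * exp (r * σ)) σ := by
        exact ((Real.hasDerivAt_exp (r * σ)).comp σ ((hasDerivAt_id σ).const_mul r)).congr_deriv
          (by simp only [id, mul_one]; ring)
      have := h1.mul (hderiv σ hσ.1)
      refine this.congr_deriv ?_
      simp only [hg]; ring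
    · exact hgint
  -- integral of exp(-(r*σ))
  have hexpTC : ∫ σ in (0:ℝ)..t, exp (-(r * σ)) =
      (-exp (-(r * t)) / r) - (-exp (-(r * 0)) / r) := by
    apply intervalIntegral.integral_eq_sub_of_hasDerivAt
    · intro σ hσ
      have h1 : HasDerivAt (fun σ => exp (-(r * σ))) (-r * exp (-(r * σ))) σ := by
        have := (Real.hasDerivAt_exp (-(r * σ))).comp σ
          (((hasDerivAt_id σ).const_mul r).neg)
        exact this.congr_deriv (by simp only [id, mul_one]; ring)
      have h2 : HasDerivAt (fun σ => -exp (-(r * σ)) / r)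
          (-(-r * exp (-(r * σ))) / r) σ := h1.neg.div_const r
      refine h2.congr_deriv ?_
      have hrne : r ≠ 0 := hrpos.ne'
      rw [neg_mul, neg_neg, mul_div_cancel_left₀ _ hrne]
    · apply Continuous.intervalIntegrable
      exact Real.continuous_exp.comp (continuous_const.mul continuous_id).neg
  -- pointwise bound
  have hmono : (∫ σ in (0:ℝ)..t, exp (r * σ) * D σ) ≤
      ∫ σ in (0:ℝ)..t, ((m ^ 2 + r) * E 0 * exp (-(r * σ)) - g σ) := by
    apply intervalIntegral.integral_mono_on ht
    · apply Continuous.intervalIntegrable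
      exact (Real.continuous_exp.comp (continuous_const.mul continuous_id)).mul hDcont
    · apply IntervalIntegrable.sub _ hgint
      apply Continuous.intervalIntegrable
      exact continuous_const.mul (Real.continuous_exp.comp
        (continuous_const.mul continuous_id).neg)
    · intro σ hσ
      have hσ0 : (0:ℝ) ≤ σ := hσ.1
      have hepos : (0:ℝ) < exp (r * σ) := exp_pos _
      have he1 : exp (r * σ) * (E' σ + D σ) ≤ exp (r * σ) * (m ^ 2 * E σ) :=
        mul_le_mul_of_nonneg_left (henergy σ hσ0) hepos.le
      have he2 : exp (r * σ) * E σ ≤ E 0 * exp (-(r * σ)) := by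
        calc exp (r * σ) * E σ ≤ exp (r * σ) * (E 0 * exp (-2 * r * σ)) :=
              mul_le_mul_of_nonneg_left (hdecay σ hσ0) hepos.le
          _ = E 0 * (exp (r * σ) * exp (-2 * r * σ)) := by ring
          _ = E 0 * exp (-(r * σ)) := by rw [← Real.exp_add]; ring_nf
      simp only [hg]
      nlinarith [mul_le_mul_of_nonneg_left he2 hmr]
  rw [intervalIntegral.integral_sub (by
      apply Continuous.intervalIntegrable
      exact continuous_const.mul (Real.continuous_exp.comp
        (continuous_const.mul continuous_id).neg)) hgint,
    intervalIntegral.integral_const_mul, hexpTC, hFTC] at hmono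
  have hFt : 0 ≤ exp (r * t) * E t := mul_nonneg (exp_pos _).le (hEnonneg t ht)
  have hexp1 : 0 < exp (-(r * t)) := exp_pos _
  have key : (m ^ 2 + r) * E 0 * ((-exp (-(r * t)) / r) - (-exp (-(r * 0)) / r))
      - (exp (r * t) * E t - exp (r * 0) * E 0) ≤ (2 + m ^ 2 / r) * E 0 := by
    simp only [mul_zero, Real.exp_zero, neg_zero]
    have h1 : (m ^ 2 + r) * E 0 * exp (-(r * t)) / r ≥ 0 := by positivity
    rw [ge_iff_le] at h1
    have : (2 + m ^ 2 / r) * E 0 = (m ^ 2 + r) * E 0 / r + E 0 := by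
      field_simp; ring
    rw [this]
    have expand : (m ^ 2 + r) * E 0 * (-exp (-(r * t)) / r - -1 / r)
        = (m ^ 2 + r) * E 0 / r - (m ^ 2 + r) * E 0 * exp (-(r * t)) / r := by
      field_simp; ring
    rw [expand]
    linarith
  linarith
end

section
/- H¹-decay: assume d/dt ‖y_x(·,t)‖₂² ≤ ‖y₀‖²_∞ ‖y_x(·,t)‖₂² and ∫₀^t e^{rσ}‖y_x(·,σ)‖₂² dσ ≤ (2 + ‖y₀‖²_∞/r)‖y₀‖₂² for all t, with r = ½((π/L)² - ‖y₀‖²_∞) > 0. Then ‖y_x(·,t)‖₂² ≤ [(r + ‖y₀‖²_∞)(2 + ‖y₀‖²_∞/r)‖y₀‖₂² + ‖y₀‖²_{H¹₀}] e^{-rt} for all t ≥ 0. -/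
open Set Real intervalIntegral

/-- H¹ decay: if g(t) = ‖y_x(·,t)‖₂² satisfies g' ≤ m² g and the weighted
dissipation bound ∫₀^t e^{rσ} g(σ) dσ ≤ (2 + m²/r)·E₀, with
r = ½((π/L)² - m²) > 0, then g(t) ≤ [(r + m²)(2 + m²/r)E₀ + g(0)] e^{-rt}. -/
theorem burgers_alpha_H1_decay (L m r E₀ : ℝ) (g g' : ℝ → ℝ)
    (hL : 0 < L) (hm : 0 ≤ m) (hmL : m < π / L)
    (hr : r = ((π / L) ^ 2 - m ^ 2) / 2)
    (hE₀ : 0 ≤ E₀)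
    (hderiv : ∀ t ≥ (0:ℝ), HasDerivAt g (g' t) t)
    (hgcont : Continuous g)
    (hgnonneg : ∀ t ≥ (0:ℝ), 0 ≤ g t)
    (hineq : ∀ t ≥ (0:ℝ), g' t ≤ m ^ 2 * g t)
    (hint : ∀ t ≥ (0:ℝ), (∫ σ in (0:ℝ)..t, exp (r * σ) * g σ) ≤ (2 + m ^ 2 / r) * E₀) :
    ∀ t ≥ (0:ℝ), g t ≤ ((r + m ^ 2) * (2 + m ^ 2 / r) * E₀ + g 0) * exp (-r * t) := by
  have hπL : 0 < π / L := div_pos Real.pi_pos hL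
  have hm2 : m ^ 2 < (π / L) ^ 2 := by
    have := pow_lt_pow_left₀ hmL hm (n := 2) (by norm_num)
    exact this
  have hrpos : 0 < r := by rw [hr]; linarith
  set C := (r + m ^ 2) * (2 + m ^ 2 / r) * E₀ + g 0 with hC
  intro t ht
  have hφcont : Continuous (fun σ => exp (r * σ) * g σ) := by
    exact (Real.continuous_exp.comp (continuous_const.mul continuous_id)).mul hgcont
  set H : ℝ → ℝ := fun u => exp (r * u) * g u -
      (r + m ^ 2) * ∫ σ in (0:ℝ)..u, exp (r * σ) * g σ with hH
  have hHderiv : ∀ s ∈ Ici (0:ℝ), HasDerivAt H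
      (exp (r * s) * (r * g s + g' s) - (r + m ^ 2) * (exp (r * s) * g s)) s := by
    intro s hs
    have he : HasDerivAt (fun u => exp (r * u)) (r * exp (r * s)) s := by
      exact ((Real.hasDerivAt_exp (r * s)).comp s
        ((hasDerivAt_id s).const_mul r)).congr_deriv (by ring)
    have h1 : HasDerivAt (fun u => exp (r * u) * g u)
        (exp (r * s) * (r * g s + g' s)) s := by
      have := he.mul (hderiv s hs)
      exact this.congr_deriv (by ring)
    have h2 : HasDerivAt (fun u => ∫ σ in (0:ℝ)..u, exp (r * σ) * g σ)
        (exp (r * s) * g s) s :=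
      (hφcont.integral_hasStrictDerivAt 0 s).hasDerivAt
    exact h1.sub (h2.const_mul (r + m ^ 2))
  have hHanti : AntitoneOn H (Ici (0:ℝ)) := by
    apply antitoneOn_of_deriv_nonpos (convex_Ici 0)
    · exact fun s hs => (hHderiv s hs).continuousAt.continuousWithinAt
    · intro s hs
      rw [interior_Ici, mem_Ioi] at hs
      exact (hHderiv s hs.le).differentiableAt.differentiableWithinAt
    · intro s hs
      rw [interior_Ici, mem_Ioi] at hs
      rw [(hHderiv s hs.le).deriv]
      have h1 := hineq s hs.le
      have h2 := hgnonneg s hs.le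
      nlinarith [exp_pos (r * s)]
  have hHt : H t ≤ H 0 := hHanti (self_mem_Ici) ht ht
  have hH0 : H 0 = g 0 := by simp [hH]
  have key : exp (r * t) * g t ≤ C := by
    have hI := hint t ht
    have h2 : (r + m ^ 2) * (∫ σ in (0:ℝ)..t, exp (r * σ) * g σ)
        ≤ (r + m ^ 2) * ((2 + m ^ 2 / r) * E₀) :=
      mul_le_mul_of_nonneg_left hI (by positivity)
    rw [hH0] at hHt
    simp only [hH] at hHt
    rw [hC]; nlinarith
  have hept : 0 < exp (r * t) := exp_pos _
  have hrw : C * exp (-r * t) = C / exp (r * t) := by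
    rw [show -r * t = -(r * t) by ring, exp_neg]; ring
  rw [hrw, le_div_iff₀ hept]
  nlinarith
end
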